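/- If Γ ⊂ 𝒫¹(S) is tight (for each ε > 0 there is a compact set K ⊂ S with P(S∖K) < ε for every P ∈ Γ), then μ_{H,W}(Γ) ≤ μ_UI(Γ); consequently, for tight Γ, μ_{H,W}(Γ) = μ_UI(Γ). -/

import Mathlib

open MeasureTheory Filter

/-- The Wasserstein metric via Kantorovich duality. -/
noncomputable def W {S : Type*} [MetricSpace S] [MeasurableSpace S]
    (P Q : Measure S) : ℝ :=
  sSup {r : ℝ | ∃ f : S → ℝ, LipschitzWith 1 f ∧ r = |(∫ x, f x ∂P) - ∫ x, f x ∂Q|}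

/-- `𝒫¹(S)`: Borel probability measures on `S` with finite first moment. -/
def P1 (S : Type*) [MetricSpace S] [MeasurableSpace S] : Set (Measure S) :=
  {P | IsProbabilityMeasure P ∧ ∀ a : S, Integrable (fun x => dist a x) P}

/-- The relative Hausdorff measure of non-compactness for the Wasserstein metric:
`μ_{H,W}(Γ) = inf_{Φ ⊆ 𝒫¹(S) finite nonempty} sup_{P ∈ Γ} inf_{Q ∈ Φ} W(P,Q)`. -/
noncomputable def muHW {S : Type*} [MetricSpace S] [MeasurableSpace S]
    (Γ : Set (Measure S)) : ℝ :=
  sInf {r : ℝ | ∃ Φ : Finset (Measure S), Φ.Nonempty ∧ ↑Φ ⊆ P1 S ∧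
    r = sSup {s : ℝ | ∃ P ∈ Γ, s = sInf {t : ℝ | ∃ Q ∈ Φ, t = W P Q}}}

/-- The measure of non-uniform integrability:
`μ_UI(Γ) = inf_{a ∈ S} inf_{B ⊆ S bounded} sup_{P ∈ Γ} ∫_{S∖B} d(a,·) dP`. -/
noncomputable def muUI {S : Type*} [MetricSpace S] [MeasurableSpace S]
    (Γ : Set (Measure S)) : ℝ :=
  sInf {r : ℝ | ∃ a : S, ∃ B : Set S, Bornology.IsBounded B ∧
    r = sSup {s : ℝ | ∃ P ∈ Γ, s = ∫ x in Bᶜ, dist a x ∂P}}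


set_option linter.unusedSectionVars false

section Aux
variable {S : Type*} [MetricSpace S] [MeasurableSpace S] [BorelSpace S]

lemma integrable_of_lip (a : S) {f : S → ℝ} (hf : LipschitzWith 1 f) {P : Measure S}
    [IsProbabilityMeasure P] (hint : Integrable (fun x => dist a x) P) :
    Integrable f P := by
  refine ((integrable_const |f a|).add hint).mono
    (hf.continuous.aestronglyMeasurable) ?_
  filter_upwards with x
  have h1 : |f x - f a| ≤ dist a x := by
    have := hf.dist_le_mul x a
    rw [Real.dist_eq] at this
    simpa [dist_comm a x] using this
  have h2 : ‖f x‖ ≤ |f a| + dist a x := by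
    have := abs_sub_abs_le_abs_sub (f x) (f a)
    rw [Real.norm_eq_abs]; linarith [abs_nonneg (f a)]
  simpa [Real.norm_eq_abs, abs_of_nonneg (add_nonneg (abs_nonneg (f a)) dist_nonneg)] using h2

lemma abs_integral_sub_le (a : S) {f : S → ℝ} (hf : LipschitzWith 1 f) {P : Measure S}
    [IsProbabilityMeasure P] (hint : Integrable (fun x => dist a x) P) :
    |(∫ x, f x ∂P) - f a| ≤ ∫ x, dist a x ∂P := by
  have hfi : Integrable f P := integrable_of_lip a hf hint
  have h1 : (∫ x, f x ∂P) - f a = ∫ x, (f x - f a) ∂P := by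
    rw [integral_sub hfi (integrable_const _), integral_const]
    simp
  rw [h1]
  calc |∫ x, (f x - f a) ∂P| ≤ ∫ x, |f x - f a| ∂P := by
        simpa [Real.norm_eq_abs] using norm_integral_le_integral_norm (fun x => f x - f a)
    _ ≤ ∫ x, dist a x ∂P := by
        refine integral_mono (hfi.sub (integrable_const _)).abs hint ?_
        intro x
        have := hf.dist_le_mul x a
        rw [Real.dist_eq] at this
        simpa [dist_comm a x] using this

lemma W_set_nonempty (P Q : Measure S) :
    {r : ℝ | ∃ f : S → ℝ, LipschitzWith 1 f ∧ r = |(∫ x, f x ∂P) - ∫ x, f x ∂Q|}.Nonempty := by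
  exact ⟨0, fun _ => 0, by simpa using (LipschitzWith.const (0:ℝ)).weaken (by norm_num), by simp⟩

lemma W_mem_le (a : S) {P Q : Measure S} (hP : P ∈ P1 S) (hQ : Q ∈ P1 S) {r : ℝ}
    (hr : r ∈ {r : ℝ | ∃ f : S → ℝ, LipschitzWith 1 f ∧ r = |(∫ x, f x ∂P) - ∫ x, f x ∂Q|}) :
    r ≤ (∫ x, dist a x ∂P) + ∫ x, dist a x ∂Q := by
  obtain ⟨f, hf, rfl⟩ := hr
  obtain ⟨hP1, hP2⟩ := hP
  obtain ⟨hQ1, hQ2⟩ := hQ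
  have h1 := abs_integral_sub_le a hf (hP2 a)
  have h2 := abs_integral_sub_le a hf (hQ2 a)
  calc |(∫ x, f x ∂P) - ∫ x, f x ∂Q|
      ≤ |(∫ x, f x ∂P) - f a| + |f a - ∫ x, f x ∂Q| := abs_sub_le _ _ _
    _ = |(∫ x, f x ∂P) - f a| + |(∫ x, f x ∂Q) - f a| := by rw [abs_sub_comm (f a)]
    _ ≤ (∫ x, dist a x ∂P) + ∫ x, dist a x ∂Q := add_le_add h1 h2

end Aux

set_option linter.unusedSectionVars false

section Aux2
variable {S : Type*} [MetricSpace S] [MeasurableSpace S] [BorelSpace S]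

lemma W_bddAbove (a : S) {P Q : Measure S} (hP : P ∈ P1 S) (hQ : Q ∈ P1 S) :
    BddAbove {r : ℝ | ∃ f : S → ℝ, LipschitzWith 1 f ∧ r = |(∫ x, f x ∂P) - ∫ x, f x ∂Q|} :=
  ⟨(∫ x, dist a x ∂P) + ∫ x, dist a x ∂Q, fun _ hr => W_mem_le a hP hQ hr⟩

lemma le_W [Nonempty S] {P Q : Measure S} (hP : P ∈ P1 S) (hQ : Q ∈ P1 S)
    {f : S → ℝ} (hf : LipschitzWith 1 f) :
    |(∫ x, f x ∂P) - ∫ x, f x ∂Q| ≤ W P Q :=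
  le_csSup (W_bddAbove (Classical.arbitrary S) hP hQ) ⟨f, hf, rfl⟩

lemma W_nonneg (P Q : Measure S) : 0 ≤ W P Q := by
  apply Real.sSup_nonneg
  rintro x ⟨f, hf, rfl⟩
  exact abs_nonneg _

lemma W_le {P Q : Measure S} {c : ℝ} (hc : 0 ≤ c)
    (h : ∀ f : S → ℝ, LipschitzWith 1 f → |(∫ x, f x ∂P) - ∫ x, f x ∂Q| ≤ c) :
    W P Q ≤ c := by
  apply Real.sSup_le _ hc
  rintro x ⟨f, hf, rfl⟩
  exact h f hf

lemma W_le_moments (a : S) {P Q : Measure S} (hP : P ∈ P1 S) (hQ : Q ∈ P1 S) :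
    W P Q ≤ (∫ x, dist a x ∂P) + ∫ x, dist a x ∂Q := by
  have : IsProbabilityMeasure P := hP.1
  have : IsProbabilityMeasure Q := hQ.1
  refine Real.sSup_le (fun r hr => W_mem_le a hP hQ hr) ?_
  have h1 : 0 ≤ ∫ x, dist a x ∂P := integral_nonneg fun x => dist_nonneg
  have h2 : 0 ≤ ∫ x, dist a x ∂Q := integral_nonneg fun x => dist_nonneg
  linarith

/-- The key lower bound: `W P Q ≥ ∫ f dP - ∫ f dQ` for `f` 1-Lipschitz. -/
lemma integral_sub_le_W [Nonempty S] {P Q : Measure S} (hP : P ∈ P1 S) (hQ : Q ∈ P1 S)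
    {f : S → ℝ} (hf : LipschitzWith 1 f) :
    (∫ x, f x ∂P) - ∫ x, f x ∂Q ≤ W P Q :=
  (le_abs_self _).trans (le_W hP hQ hf)

end Aux2

section Pick
variable {S : Type*} [MetricSpace S] [MeasurableSpace S] [BorelSpace S]

/-- Picks the first point of `l` within distance `< ε` of `x`, defaulting to `a`. -/
noncomputable def pick (a : S) (ε : ℝ) : List S → S → S
  | [], _ => a
  | y :: ys, x => if dist x y < ε then y else pick a ε ys x

lemma measurable_pick (a : S) (ε : ℝ) (l : List S) : Measurable (fun x => pick a ε l x) := by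
  induction l with
  | nil => exact measurable_const
  | cons y ys ih =>
      have hs : MeasurableSet {x : S | dist x y < ε} :=
        (isOpen_lt (by fun_prop) continuous_const).measurableSet
      exact Measurable.ite hs measurable_const ih

lemma pick_spec (a : S) (ε : ℝ) (l : List S) (x : S) (h : ∃ y ∈ l, dist x y < ε) :
    dist x (pick a ε l x) < ε ∧ pick a ε l x ∈ l := by
  induction l with
  | nil => simp at h
  | cons y ys ih =>
      by_cases hy : dist x y < ε
      · simp [pick, hy]
      · obtain ⟨z, hz, hdz⟩ := h
        rcases List.mem_cons.mp hz with rfl | hz'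
        · exact absurd hdz hy
        · have := ih ⟨z, hz', hdz⟩
          simp only [pick, if_neg hy]
          exact ⟨this.1, List.mem_cons_of_mem _ this.2⟩

lemma pick_mem_insert (a : S) (ε : ℝ) (l : List S) (x : S) :
    pick a ε l x = a ∨ pick a ε l x ∈ l := by
  induction l with
  | nil => left; rfl
  | cons y ys ih =>
      by_cases hy : dist x y < ε
      · right; simp [pick, hy]
      · simp only [pick, if_neg hy]
        rcases ih with h | h
        · left; exact h
        · right; exact List.mem_cons_of_mem _ h

end Pick

section Psi
variable {S : Type*} [MetricSpace S] [MeasurableSpace S] [BorelSpace S]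

lemma integrable_dirac'' {f : S → ℝ} (hf : Measurable f) (y : S) :
    Integrable f (Measure.dirac y) := by
  refine ⟨hf.aestronglyMeasurable, ?_⟩
  simp [HasFiniteIntegral, MeasureTheory.lintegral_dirac]

/-- Discrete measure with weights `v` on the finite set `t`. -/
noncomputable def Psi (t : Finset S) (v : S → ℝ) : Measure S :=
  ∑ y ∈ t, ENNReal.ofReal (v y) • Measure.dirac y

lemma integrable_psi (t : Finset S) (v : S → ℝ) {f : S → ℝ} (hf : Measurable f) :
    Integrable f (Psi t v) := by
  rw [Psi, integrable_finset_sum_measure]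
  intro y _
  exact (integrable_dirac'' hf y).smul_measure ENNReal.ofReal_ne_top

lemma integral_psi (t : Finset S) (v : S → ℝ) (hv : ∀ y ∈ t, 0 ≤ v y)
    {f : S → ℝ} (hf : Measurable f) :
    ∫ x, f x ∂(Psi t v) = ∑ y ∈ t, v y * f y := by
  rw [Psi, integral_finset_sum_measure
    (fun y _ => (integrable_dirac'' hf y).smul_measure ENNReal.ofReal_ne_top)]
  refine Finset.sum_congr rfl fun y hy => ?_
  rw [integral_smul_measure, integral_dirac, smul_eq_mul, ENNReal.toReal_ofReal (hv y hy)]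

lemma psi_isProb (t : Finset S) (v : S → ℝ) (hv : ∀ y ∈ t, 0 ≤ v y)
    (hsum : ∑ y ∈ t, v y = 1) : IsProbabilityMeasure (Psi t v) := by
  constructor
  rw [Psi, Measure.finset_sum_apply]
  have : ∀ y ∈ t, (ENNReal.ofReal (v y) • Measure.dirac y) Set.univ = ENNReal.ofReal (v y) := by
    intro y _
    simp [Measure.smul_apply]
  rw [Finset.sum_congr rfl this, ← ENNReal.ofReal_sum_of_nonneg hv, hsum, ENNReal.ofReal_one]

lemma psi_mem_P1 (t : Finset S) (v : S → ℝ) (hv : ∀ y ∈ t, 0 ≤ v y)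
    (hsum : ∑ y ∈ t, v y = 1) : Psi t v ∈ P1 S := by
  refine ⟨psi_isProb t v hv hsum, fun b => ?_⟩
  exact integrable_psi t v ((continuous_const.dist continuous_id).measurable)

end Psi

section Net
variable {S : Type*} [MetricSpace S] [MeasurableSpace S] [BorelSpace S]

lemma key_net [Nonempty S] {Γ : Set (Measure S)} (hΓ : Γ ⊆ P1 S) (a : S) (R : ℝ) (hR : 0 ≤ R)
    (r : ℝ) (hrnn : 0 ≤ r)
    (hr : ∀ P ∈ Γ, ∫ x in (Metric.closedBall a R)ᶜ, dist a x ∂P ≤ r)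
    {ε : ℝ} (hε : 0 < ε) {K : Set S} (hK : IsCompact K)
    (htight : ∀ P ∈ Γ, P Kᶜ ≤ ENNReal.ofReal (ε / (R + 1))) :
    ∃ Φ : Finset (Measure S), Φ.Nonempty ∧ ↑Φ ⊆ P1 S ∧
      ∀ P ∈ Γ, ∃ Q ∈ Φ, W P Q ≤ r + 3 * ε := by
  classical
  set B := Metric.closedBall a R with hBdef
  have hBmeas : MeasurableSet B := Metric.isClosed_closedBall.measurableSet
  -- finite cover of K by ε-balls
  obtain ⟨c, hc⟩ := hK.elim_finite_subcover (fun y : S => Metric.ball y ε)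
    (fun y => Metric.isOpen_ball) (fun x hx => Set.mem_iUnion.mpr ⟨x, Metric.mem_ball_self hε⟩)
  set t : Finset S := insert a c with htdef
  have hat : a ∈ t := Finset.mem_insert_self a c
  -- the transport map
  set T : S → S := fun x => if x ∈ K then pick a ε t.toList x else a with hTdef
  have hTmeas : Measurable T :=
    Measurable.ite hK.isClosed.measurableSet (measurable_pick a ε t.toList) measurable_const
  have hTmem : ∀ x, T x ∈ t := by
    intro x
    by_cases hx : x ∈ K
    · simp only [hTdef, if_pos hx]
      rcases pick_mem_insert a ε t.toList x with h | h
      · rw [h]; exact hat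
      · exact Finset.mem_toList.mp h
    · simp only [hTdef, if_neg hx]; exact hat
  have hTK : ∀ x ∈ K, dist x (T x) < ε := by
    intro x hx
    have hx' := hc hx
    obtain ⟨y, hy, hxy⟩ := Set.mem_iUnion₂.mp hx'
    have : ∃ z ∈ t.toList, dist x z < ε :=
      ⟨y, Finset.mem_toList.mpr (Finset.mem_insert_of_mem hy), Metric.mem_ball.mp hxy⟩
    simp only [hTdef, if_pos hx]
    exact (pick_spec a ε t.toList x this).1
  have hTnotK : ∀ x ∉ K, T x = a := fun x hx => by simp only [hTdef, if_neg hx]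
  -- distance sum
  set Dtot : ℝ := ∑ y ∈ t, dist a y with hDdef
  have hDnn : 0 ≤ Dtot := Finset.sum_nonneg fun y _ => dist_nonneg
  set δ : ℝ := ε / (Dtot + 1) with hδdef
  have hδpos : 0 < δ := div_pos hε (by linarith)
  -- finite net in the simplex
  have htb := (isCompact_stdSimplex ℝ (↥t)).totallyBounded
  rw [totallyBounded_iff_subset] at htb
  obtain ⟨E, hEsub, hEfin, hEcov⟩ := htb _ (Metric.dist_mem_uniformity hδpos)
  -- the simplex is nonempty
  have hsne : (stdSimplex ℝ (↥t)).Nonempty := by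
    refine ⟨fun i => if i = ⟨a, hat⟩ then 1 else 0, fun i => by positivity, ?_⟩
    simp
  obtain ⟨u₀, hu₀⟩ := hsne
  have hEne : E.Nonempty := by
    have := hEcov hu₀
    obtain ⟨e, he, -⟩ := Set.mem_iUnion₂.mp this
    exact ⟨e, he⟩
  -- extension of a weight vector to S
  set ext : (↥t → ℝ) → S → ℝ := fun u y => if h : y ∈ t then u ⟨y, h⟩ else 0 with hextdef
  have hext_nonneg : ∀ u ∈ stdSimplex ℝ (↥t), ∀ y ∈ t, 0 ≤ ext u y := by
    intro u hu y hy
    simp only [hextdef, dif_pos hy]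
    exact hu.1 _
  have hext_sum : ∀ u ∈ stdSimplex ℝ (↥t), ∑ y ∈ t, ext u y = 1 := by
    intro u hu
    have : ∑ y ∈ t, ext u y = ∑ y ∈ t.attach, u y := by
      rw [← Finset.sum_attach t (fun y => ext u y)]
      refine Finset.sum_congr rfl fun y _ => ?_
      simp only [hextdef, dif_pos y.2]
    rw [this, ← Finset.univ_eq_attach]
    exact hu.2
  -- the finite set of candidate measures
  set Φ : Finset (Measure S) := hEfin.toFinset.image (fun u => Psi t (ext u)) with hΦdef
  have hΦsub : ↑Φ ⊆ P1 S := by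
    intro Q hQ
    simp only [hΦdef, Finset.coe_image, Set.mem_image, Finset.mem_coe,
      Set.Finite.mem_toFinset] at hQ
    obtain ⟨u, huE, rfl⟩ := hQ
    exact psi_mem_P1 t _ (hext_nonneg u (hEsub huE)) (hext_sum u (hEsub huE))
  obtain ⟨e₀, he₀⟩ := hEne
  have hΦne : Φ.Nonempty := ⟨_, Finset.mem_image_of_mem _ (hEfin.mem_toFinset.mpr he₀)⟩
  refine ⟨Φ, hΦne, hΦsub, ?_⟩
  intro P hPΓ
  obtain ⟨hPprob, hPint⟩ := hΓ hPΓ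
  -- the weight vector of P
  set w : S → ℝ := fun y => (P (T ⁻¹' {y})).toReal with hwdef
  have hwnn : ∀ y, 0 ≤ w y := fun y => ENNReal.toReal_nonneg
  have hwsum : ∑ y ∈ t, w y = 1 := by
    have hdisj : (↑t : Set S).PairwiseDisjoint (fun y => T ⁻¹' {y}) :=
      fun y _ z _ hne => Disjoint.preimage T (Set.disjoint_singleton.mpr hne)
    have hmeas : ∀ y ∈ t, MeasurableSet (T ⁻¹' {y}) :=
      fun y _ => hTmeas (measurableSet_singleton y)
    have hcov : ⋃ y ∈ t, T ⁻¹' {y} = Set.univ := by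
      ext x
      simp only [Set.mem_iUnion, Set.mem_univ, iff_true, Set.mem_preimage,
        Set.mem_singleton_iff]
      exact ⟨T x, hTmem x, rfl⟩
    have h1 : ∑ y ∈ t, P (T ⁻¹' {y}) = 1 := by
      rw [← measure_biUnion_finset hdisj hmeas, hcov, measure_univ]
    calc ∑ y ∈ t, w y = (∑ y ∈ t, P (T ⁻¹' {y})).toReal :=
          (ENNReal.toReal_sum (fun y _ => measure_ne_top P _)).symm
      _ = 1 := by rw [h1, ENNReal.toReal_one]
  set uP : ↥t → ℝ := fun y => w ↑y with huPdef
  have huPs : uP ∈ stdSimplex ℝ (↥t) := by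
    refine ⟨fun i => hwnn _, ?_⟩
    rw [Finset.univ_eq_attach]
    rw [show ∑ y ∈ t.attach, uP y = ∑ y ∈ t, w y from Finset.sum_attach t w]
    exact hwsum
  obtain ⟨e, heE, hue'⟩ := Set.mem_iUnion₂.mp (hEcov huPs)
  have hue : dist uP e < δ := hue'
  have hes : e ∈ stdSimplex ℝ (↥t) := hEsub heE
  set v : S → ℝ := ext e with hvdef
  have hvnn : ∀ y ∈ t, 0 ≤ v y := hext_nonneg e hes
  have hvsum : ∑ y ∈ t, v y = 1 := hext_sum e hes
  set Q : Measure S := Psi t v with hQdef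
  have hQΦ : Q ∈ Φ := Finset.mem_image_of_mem _ (hEfin.mem_toFinset.mpr heE)
  refine ⟨Q, hQΦ, ?_⟩
  -- main estimate, via the dual formulation
  refine W_le (by linarith) ?_
  intro f hf
  have hfi : Integrable f P := integrable_of_lip a hf (hPint a)
  have hrep : (fun x => f (T x)) = fun x => ∑ y ∈ t, Set.indicator (T ⁻¹' {y}) (fun _ => f y) x := by
    funext x
    rw [Finset.sum_eq_single_of_mem (T x) (hTmem x)]
    · rw [Set.indicator_of_mem (by simp [Set.mem_preimage] : x ∈ T ⁻¹' {T x})]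
    · intro y _ hne
      exact Set.indicator_of_notMem
        (by simp only [Set.mem_preimage, Set.mem_singleton_iff]; exact fun h => hne h.symm) _
  have hintind : ∀ y ∈ t, Integrable (fun x => Set.indicator (T ⁻¹' {y}) (fun _ => f y) x) P :=
    fun y _ => (integrable_const (f y)).indicator (hTmeas (measurableSet_singleton y))
  have hfTi : Integrable (fun x => f (T x)) P := by
    rw [hrep]; exact integrable_finset_sum _ hintind
  have hfT_int : ∫ x, f (T x) ∂P = ∑ y ∈ t, w y * f y := by
    rw [hrep, integral_finset_sum _ hintind]
    refine Finset.sum_congr rfl fun y hy => ?_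
    rw [integral_indicator_const _ (hTmeas (measurableSet_singleton y))]
    simp [hwdef, smul_eq_mul, Measure.real]
  have hfQ : ∫ x, f x ∂Q = ∑ y ∈ t, v y * f y :=
    integral_psi t v hvnn hf.continuous.measurable
  -- Part 1: |∫ f dP - ∫ f∘T dP| ≤ ε + ε + r
  set bound : S → ℝ := fun x => ε + Set.indicator (Kᶜ ∩ B) (fun _ => R) x
      + Set.indicator Bᶜ (fun x => dist a x) x with hbddef
  have hKBmeas : MeasurableSet (Kᶜ ∩ B) := hK.isClosed.measurableSet.compl.inter hBmeas
  have hbound_int : Integrable bound P := by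
    refine Integrable.add (Integrable.add (integrable_const ε) ?_) ?_
    · exact (integrable_const R).indicator hKBmeas
    · exact (hPint a).indicator hBmeas.compl
  have habs : ∀ x, |f x - f (T x)| ≤ bound x := by
    intro x
    have hlip : ∀ z, |f x - f z| ≤ dist x z := fun z => by
      have h := hf.dist_le_mul x z
      rw [Real.dist_eq] at h
      simpa using h
    have i1 : 0 ≤ Set.indicator (Kᶜ ∩ B) (fun _ => R) x :=
      Set.indicator_nonneg (fun _ _ => hR) x
    have i2 : 0 ≤ Set.indicator Bᶜ (fun x => dist a x) x :=
      Set.indicator_nonneg (fun _ _ => dist_nonneg) x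
    by_cases hx : x ∈ K
    · have h1 := (hlip (T x)).trans (hTK x hx).le
      simp only [hbddef]; linarith
    · rw [hTnotK x hx]
      by_cases hxB : x ∈ B
      · have h1 : |f x - f a| ≤ R := (hlip a).trans (Metric.mem_closedBall.mp hxB)
        have h2 : Set.indicator (Kᶜ ∩ B) (fun _ => R) x = R :=
          Set.indicator_of_mem (Set.mem_inter (Set.mem_compl hx) hxB) _
        simp only [hbddef]; linarith
      · have h1 : |f x - f a| ≤ dist a x := (hlip a).trans (by rw [dist_comm])
        have h2 : Set.indicator Bᶜ (fun x => dist a x) x = dist a x :=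
          Set.indicator_of_mem (Set.mem_compl hxB) _
        simp only [hbddef]; linarith
  have hpart1 : |∫ x, f x ∂P - ∫ x, f (T x) ∂P| ≤ ε + ε + r := by
    have step1 : |∫ x, f x ∂P - ∫ x, f (T x) ∂P| ≤ ∫ x, bound x ∂P := by
      rw [← integral_sub hfi hfTi]
      calc |∫ x, (f x - f (T x)) ∂P|
          ≤ ∫ x, |f x - f (T x)| ∂P := by
            simpa [Real.norm_eq_abs] using
              norm_integral_le_integral_norm (fun x => f x - f (T x))
        _ ≤ ∫ x, bound x ∂P :=
            integral_mono (hfi.sub hfTi).abs hbound_int habs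
    have hI1a : Integrable (fun x : S => Set.indicator (Kᶜ ∩ B) (fun _ => R) x) P :=
      (integrable_const R).indicator hKBmeas
    have hI1 : Integrable (fun x : S => ε + Set.indicator (Kᶜ ∩ B) (fun _ => R) x) P := by
      exact (integrable_const ε).add hI1a
    have hI2 : Integrable (fun x : S => Set.indicator Bᶜ (fun x => dist a x) x) P :=
      (hPint a).indicator hBmeas.compl
    have step2 : ∫ x, bound x ∂P
        = ε + (P (Kᶜ ∩ B)).toReal * R + ∫ x in Bᶜ, dist a x ∂P := by
      simp only [hbddef]
      rw [integral_add hI1 hI2, integral_add (integrable_const ε) hI1a,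
        integral_const, integral_indicator_const _ hKBmeas, integral_indicator hBmeas.compl]
      simp [smul_eq_mul, Measure.real]
    have hmb : (P (Kᶜ ∩ B)).toReal ≤ ε / (R + 1) := by
      refine ENNReal.toReal_le_of_le_ofReal (by positivity) ?_
      exact le_trans (measure_mono (Set.inter_subset_left)) (htight P hPΓ)
    have hRb : (P (Kᶜ ∩ B)).toReal * R ≤ ε := by
      have h1 : (P (Kᶜ ∩ B)).toReal * R ≤ (ε / (R + 1)) * R :=
        mul_le_mul_of_nonneg_right hmb hR
      have h2 : (ε / (R + 1)) * R ≤ ε := by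
        rw [div_mul_eq_mul_div, div_le_iff₀ (by linarith : (0:ℝ) < R + 1)]
        nlinarith
      linarith
    have := hr P hPΓ
    rw [step2] at step1
    linarith
  -- Part 2: the quantization error
  have hwv : ∀ y ∈ t, |w y - v y| ≤ δ := by
    intro y hy
    have h1 : v y = e ⟨y, hy⟩ := dif_pos hy
    have h2 : w y = uP ⟨y, hy⟩ := rfl
    rw [h1, h2, ← Real.dist_eq]
    exact (dist_le_pi_dist uP e ⟨y, hy⟩).trans hue.le
  have hpart2 : |∑ y ∈ t, w y * f y - ∑ y ∈ t, v y * f y| ≤ ε := by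
    have hrw : ∑ y ∈ t, w y * f y - ∑ y ∈ t, v y * f y
        = ∑ y ∈ t, (w y - v y) * (f y - f a) := by
      have h0 : ∑ y ∈ t, (w y - v y) = 0 := by
        rw [Finset.sum_sub_distrib, hwsum, hvsum]; ring
      have hexp : ∀ y ∈ t, (w y - v y) * (f y - f a)
          = (w y * f y - v y * f y) - (w y - v y) * f a := fun y _ => by ring
      rw [Finset.sum_congr rfl hexp, Finset.sum_sub_distrib, ← Finset.sum_mul, h0,
        zero_mul, sub_zero, Finset.sum_sub_distrib]
    rw [hrw]
    calc |∑ y ∈ t, (w y - v y) * (f y - f a)|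
        ≤ ∑ y ∈ t, |(w y - v y) * (f y - f a)| := Finset.abs_sum_le_sum_abs _ _
      _ ≤ ∑ y ∈ t, δ * dist a y := by
          refine Finset.sum_le_sum fun y hy => ?_
          rw [abs_mul]
          refine mul_le_mul (hwv y hy) ?_ (abs_nonneg _) hδpos.le
          have h := hf.dist_le_mul y a
          rw [Real.dist_eq] at h
          calc |f y - f a| ≤ dist y a := by simpa using h
            _ = dist a y := dist_comm y a
      _ = δ * Dtot := by rw [← Finset.mul_sum]
      _ ≤ ε := by
          rw [hδdef, div_mul_eq_mul_div, div_le_iff₀ (by linarith : (0:ℝ) < Dtot + 1)]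
          nlinarith
  -- combine
  calc |(∫ x, f x ∂P) - ∫ x, f x ∂Q|
      ≤ |(∫ x, f x ∂P) - ∫ x, f (T x) ∂P| + |(∫ x, f (T x) ∂P) - ∫ x, f x ∂Q| :=
        abs_sub_le _ _ _
    _ ≤ (ε + ε + r) + ε := by
        refine add_le_add hpart1 ?_
        rw [hfT_int, hfQ]
        exact hpart2
    _ = r + 3 * ε := by ring


end Net


section Dir2
variable {S : Type*} [MetricSpace S] [MeasurableSpace S] [BorelSpace S]

/-- The truncated tail function `x ↦ max (dist a x - c) 0`. -/
noncomputable def tailF (a : S) (c : ℝ) : S → ℝ := fun x => max (dist a x - c) 0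

lemma tailF_lip (a : S) (c : ℝ) : LipschitzWith 1 (tailF a c) := by
  have h1 : LipschitzWith 1 (fun x : S => dist a x - c) := by
    refine LipschitzWith.of_dist_le_mul fun x y => ?_
    rw [Real.dist_eq, NNReal.coe_one, one_mul]
    have h : dist a x - c - (dist a y - c) = dist x a - dist y a := by
      rw [dist_comm x a, dist_comm y a]; ring
    rw [h]
    exact abs_dist_sub_le x y a
  exact h1.max_const 0

lemma tailF_nonneg (a : S) (c : ℝ) (x : S) : 0 ≤ tailF a c x := le_max_right _ _

lemma tailF_le_dist (a : S) {c : ℝ} (hc : 0 ≤ c) (x : S) : tailF a c x ≤ dist a x :=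
  max_le (by linarith [dist_nonneg (x := a) (y := x)]) dist_nonneg

lemma tailF_integrable (a : S) {c : ℝ} (hc : 0 ≤ c) {P : Measure S}
    (hP : Integrable (fun x => dist a x) P) : Integrable (tailF a c) P := by
  refine hP.mono ((tailF_lip a c).continuous.aestronglyMeasurable) ?_
  filter_upwards with x
  rw [Real.norm_eq_abs, abs_of_nonneg (tailF_nonneg a c x), Real.norm_eq_abs,
    abs_of_nonneg dist_nonneg]
  exact tailF_le_dist a hc x

lemma tailF_anti (a : S) {c d : ℝ} (hcd : c ≤ d) (x : S) : tailF a d x ≤ tailF a c x :=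
  max_le_max (by linarith) le_rfl

lemma tendsto_tail (a : S) {Q : Measure S} (hQint : Integrable (fun x => dist a x) Q) :
    Tendsto (fun n : ℕ => ∫ x, tailF a n x ∂Q) atTop (nhds 0) := by
  have h := tendsto_integral_of_dominated_convergence (μ := Q)
    (F := fun n x => tailF a (n : ℝ) x) (f := fun _ => (0:ℝ)) (fun x => dist a x)
    (fun n => (tailF_lip a n).continuous.aestronglyMeasurable) hQint
    (fun n => by
      filter_upwards with x
      rw [Real.norm_eq_abs, abs_of_nonneg (tailF_nonneg a _ x)]
      exact tailF_le_dist a (Nat.cast_nonneg n) x)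
    (by
      filter_upwards with x
      refine tendsto_atTop_of_eventually_const (i₀ := ⌈dist a x⌉₊) fun n hn => ?_
      have : dist a x ≤ (n : ℝ) := le_trans (Nat.le_ceil _) (by exact_mod_cast hn)
      simp [tailF, max_eq_right, sub_nonpos.mpr this])
  simpa using h

/-- A uniform tail bound over a finite set of measures. -/
lemma uniform_tail (a : S) (Φ : Finset (Measure S)) (hΦsub : ↑Φ ⊆ P1 S)
    {ε : ℝ} (hε : 0 < ε) :
    ∃ n : ℕ, ∀ Q ∈ Φ, ∫ x, tailF a n x ∂Q ≤ ε := by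
  classical
  have hex : ∀ Q ∈ Φ, ∃ n : ℕ, ∫ x, tailF a n x ∂Q ≤ ε := by
    intro Q hQ
    have ht := tendsto_tail a ((hΦsub hQ).2 a)
    have := (Metric.tendsto_atTop.mp ht) ε hε
    obtain ⟨N, hN⟩ := this
    refine ⟨N, ?_⟩
    have := hN N le_rfl
    rw [Real.dist_eq, sub_zero] at this
    exact (le_abs_self _).trans this.le
  choose g hg using hex
  refine ⟨Φ.sup fun Q => if h : Q ∈ Φ then g Q h else 0, fun Q hQ => ?_⟩
  have hle : (g Q hQ : ℝ) ≤ (Φ.sup fun Q => if h : Q ∈ Φ then g Q h else 0 : ℕ) := by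
    exact_mod_cast Nat.cast_le.mpr (le_trans (by rw [dif_pos hQ]) (Finset.le_sup hQ))
  refine le_trans ?_ (hg Q hQ)
  refine integral_mono (tailF_integrable a (Nat.cast_nonneg _) ((hΦsub hQ).2 a))
    (tailF_integrable a (Nat.cast_nonneg _) ((hΦsub hQ).2 a)) ?_
  exact fun x => tailF_anti a hle x

/-- Direction 2 core: if every `P ∈ Γ` is within `ρ` of the finite set `Φ ⊆ 𝒫¹`,
then `μ_UI Γ ≤ ρ`. -/
lemma muUI_le_bound [Nonempty S] {Γ : Set (Measure S)} (hΓ : Γ ⊆ P1 S)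
    (Φ : Finset (Measure S)) (hΦsub : ↑Φ ⊆ P1 S)
    (ρ : ℝ) (hρnn : 0 ≤ ρ) (hρ : ∀ P ∈ Γ, ∃ Q ∈ Φ, W P Q ≤ ρ) :
    muUI Γ ≤ ρ := by
  obtain ⟨a⟩ := ‹Nonempty S›
  refine le_of_forall_pos_le_add fun ε hε => ?_
  obtain ⟨n, hn⟩ := uniform_tail a Φ hΦsub (half_pos hε)
  set s : ℝ := 2 * n * (ρ + ε) / ε + n + 1 with hsdef
  have hsn : (n : ℝ) < s := by
    rw [hsdef]
    have h0 : 0 ≤ 2 * (n:ℝ) * (ρ + ε) / ε := by positivity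
    linarith
  have hspos : 0 < s := lt_of_le_of_lt (Nat.cast_nonneg n) hsn
  set c : ℝ := s / (s - n) with hcdef
  have hc1 : 0 < s - n := by linarith
  have hcpos : 0 < c := div_pos hspos hc1
  set B : Set S := Metric.closedBall a s with hBdef
  have hBb : Bornology.IsBounded B := Metric.isBounded_closedBall
  have hBcm : MeasurableSet Bᶜ := Metric.isClosed_closedBall.measurableSet.compl
  clear_value s c B
  have key : ∀ P ∈ Γ, ∫ x in Bᶜ, dist a x ∂P ≤ ρ + ε := by
    intro P hP
    obtain ⟨Q, hQΦ, hQW⟩ := hρ P hP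
    have hPint := (hΓ hP).2 a
    have hPprob : IsProbabilityMeasure P := (hΓ hP).1
    -- pointwise bound on Bᶜ
    have hpt : ∀ x ∈ Bᶜ, dist a x ≤ c * tailF a n x := by
      intro x hx
      have hdx : s < dist a x := by
        simp only [hBdef, Set.mem_compl_iff, Metric.mem_closedBall, not_le] at hx
        rwa [dist_comm]
      have htf : tailF a n x = dist a x - n := by
        rw [tailF, max_eq_left]; linarith
      rw [htf, hcdef, div_mul_eq_mul_div, le_div_iff₀ hc1]
      nlinarith [hdx, Nat.cast_nonneg (α := ℝ) n]
    have hTint : Integrable (tailF a n) P := tailF_integrable a (Nat.cast_nonneg n) hPint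
    calc ∫ x in Bᶜ, dist a x ∂P
        ≤ ∫ x in Bᶜ, c * tailF a n x ∂P := by
          refine setIntegral_mono_on hPint.integrableOn ((hTint.const_mul c).integrableOn)
            hBcm hpt
      _ = c * ∫ x in Bᶜ, tailF a n x ∂P := integral_const_mul c _
      _ ≤ c * ∫ x, tailF a n x ∂P := by
          refine mul_le_mul_of_nonneg_left ?_ hcpos.le
          exact setIntegral_le_integral hTint (Eventually.of_forall (tailF_nonneg a n))
      _ ≤ c * (ε / 2 + ρ) := by
          refine mul_le_mul_of_nonneg_left ?_ hcpos.le
          have h1 : (∫ x, tailF a n x ∂P) - ∫ x, tailF a n x ∂Q ≤ W P Q :=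
            integral_sub_le_W (hΓ hP) (hΦsub hQΦ) (tailF_lip a n)
          have h2 := hn Q hQΦ
          linarith
      _ ≤ ρ + ε := by
          have hs2 : 2 * (n:ℝ) * (ρ + ε) / ε ≤ s := by
            rw [hsdef]; linarith [Nat.cast_nonneg (α := ℝ) n]
          have hs3 : 2 * (n:ℝ) * (ρ + ε) ≤ s * ε := by
            rwa [div_le_iff₀ hε] at hs2
          rw [hcdef, div_mul_eq_mul_div, div_le_iff₀ hc1]
          rw [← sub_nonneg]
          have hkey : (ρ + ε) * (s - ↑n) - s * (ε / 2 + ρ)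
              = (s * ε - 2 * ↑n * (ρ + ε)) / 2 := by ring
          rw [hkey]
          linarith [hs3]
  -- conclude
  have hmem : (sSup {u : ℝ | ∃ P ∈ Γ, u = ∫ x in Bᶜ, dist a x ∂P}) ∈
      {r : ℝ | ∃ a : S, ∃ B : Set S, Bornology.IsBounded B ∧
        r = sSup {u : ℝ | ∃ P ∈ Γ, u = ∫ x in Bᶜ, dist a x ∂P}} :=
    ⟨a, B, hBb, rfl⟩
  have hbdd : BddBelow {r : ℝ | ∃ a : S, ∃ B : Set S, Bornology.IsBounded B ∧
      r = sSup {u : ℝ | ∃ P ∈ Γ, u = ∫ x in Bᶜ, dist a x ∂P}} := by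
    refine ⟨0, ?_⟩
    rintro r ⟨a', B', hB', rfl⟩
    refine Real.sSup_nonneg ?_
    rintro u ⟨P, hP, rfl⟩
    exact integral_nonneg fun x => dist_nonneg
  refine le_trans (csInf_le hbdd hmem) ?_
  refine Real.sSup_le ?_ (by linarith)
  rintro u ⟨P, hP, rfl⟩
  exact key P hP

end Dir2


/-- If `Γ ⊆ 𝒫¹(S)` is tight, then `μ_{H,W}(Γ) ≤ μ_UI(Γ)`, and consequently
`μ_{H,W}(Γ) = μ_UI(Γ)`. -/
theorem muHW_le_muUI_of_tight
    {S : Type*} [MetricSpace S] [CompleteSpace S] [TopologicalSpace.SeparableSpace S]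
    [MeasurableSpace S] [BorelSpace S]
    (Γ : Set (Measure S)) (hΓ : Γ ⊆ P1 S)
    (htight : ∀ ε : ℝ, 0 < ε → ∃ K : Set S, IsCompact K ∧
      ∀ P ∈ Γ, P Kᶜ < ENNReal.ofReal ε) :
    muHW Γ ≤ muUI Γ ∧ muHW Γ = muUI Γ := by
  classical
  rcases isEmpty_or_nonempty S with hS | hS
  · -- degenerate case: `S` is empty
    have h1 : muHW Γ = 0 := by
      rw [muHW]
      convert Real.sInf_empty using 2
      rw [Set.eq_empty_iff_forall_notMem]
      rintro r ⟨Φ, ⟨Q, hQ⟩, hsub, -⟩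
      have hprob : IsProbabilityMeasure Q := (hsub hQ).1
      have := hprob.measure_univ
      rw [Set.univ_eq_empty_iff.mpr hS, measure_empty] at this
      exact one_ne_zero this.symm
    have h2 : muUI Γ = 0 := by
      rw [muUI]
      convert Real.sInf_empty using 2
      rw [Set.eq_empty_iff_forall_notMem]
      rintro r ⟨a, -⟩
      exact hS.false a
    rw [h1, h2]
    exact ⟨le_refl 0, rfl⟩
  obtain ⟨a₀⟩ := hS
  haveI : Nonempty S := ⟨a₀⟩
  -- the reference measure δ_{a₀}
  set Q₀ : Measure S := Measure.dirac a₀ with hQ₀def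
  have hQ₀ : Q₀ ∈ P1 S :=
    ⟨by rw [hQ₀def]; infer_instance,
     fun b => integrable_dirac'' ((continuous_const.dist continuous_id).measurable) a₀⟩
  have hQ₀sub : ↑({Q₀} : Finset (Measure S)) ⊆ P1 S := by
    intro Q hQ
    rw [Finset.coe_singleton, Set.mem_singleton_iff] at hQ
    rw [hQ]; exact hQ₀
  have hQ₀int : ∫ x, dist a₀ x ∂Q₀ = 0 := by
    rw [hQ₀def, integral_dirac (fun x => dist a₀ x) a₀, dist_self]
  -- lower bounds for the two defining sets
  have hHWbdd : BddBelow {r : ℝ | ∃ Φ : Finset (Measure S), Φ.Nonempty ∧ ↑Φ ⊆ P1 S ∧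
      r = sSup {s : ℝ | ∃ P ∈ Γ, s = sInf {t : ℝ | ∃ Q ∈ Φ, t = W P Q}}} := by
    refine ⟨0, ?_⟩
    rintro r ⟨Φ, hΦne, hΦsub, rfl⟩
    refine Real.sSup_nonneg ?_
    rintro s ⟨P, hP, rfl⟩
    refine Real.sInf_nonneg ?_
    rintro t ⟨Q, hQ, rfl⟩
    exact W_nonneg _ _
  have hUIbdd : BddBelow {r : ℝ | ∃ a : S, ∃ B : Set S, Bornology.IsBounded B ∧
      r = sSup {s : ℝ | ∃ P ∈ Γ, s = ∫ x in Bᶜ, dist a x ∂P}} := by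
    refine ⟨0, ?_⟩
    rintro r ⟨a, B, hB, rfl⟩
    refine Real.sSup_nonneg ?_
    rintro s ⟨P, hP, rfl⟩
    exact integral_nonneg fun x => dist_nonneg
  -- Direction 1 : muHW ≤ muUI
  have dir1 : muHW Γ ≤ muUI Γ := by
    refine le_csInf ⟨_, ⟨a₀, ∅, Bornology.isBounded_empty, rfl⟩⟩ ?_
    rintro r ⟨a, B, hB, rfl⟩
    by_cases hbdd : BddAbove {s : ℝ | ∃ P ∈ Γ, s = ∫ x in Bᶜ, dist a x ∂P}
    · -- bounded case: genuine estimate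
      have hrnn : 0 ≤ sSup {s : ℝ | ∃ P ∈ Γ, s = ∫ x in Bᶜ, dist a x ∂P} := by
        refine Real.sSup_nonneg ?_
        rintro s ⟨P, hP, rfl⟩
        exact integral_nonneg fun x => dist_nonneg
      obtain ⟨R0, hR0⟩ := (Metric.isBounded_iff_subset_closedBall a).mp hB
      set R : ℝ := max R0 0 with hRdef
      have hRnn : 0 ≤ R := le_max_right R0 0
      have hsubB : B ⊆ Metric.closedBall a R :=
        hR0.trans (Metric.closedBall_subset_closedBall (le_max_left _ _))
      have hr' : ∀ P ∈ Γ, ∫ x in (Metric.closedBall a R)ᶜ, dist a x ∂P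
          ≤ sSup {s : ℝ | ∃ P ∈ Γ, s = ∫ x in Bᶜ, dist a x ∂P} := by
        intro P hP
        have hPint := (hΓ hP).2 a
        have step : ∫ x in (Metric.closedBall a R)ᶜ, dist a x ∂P
            ≤ ∫ x in Bᶜ, dist a x ∂P := by
          refine setIntegral_mono_set hPint.integrableOn
            (Eventually.of_forall fun x => dist_nonneg) ?_
          exact (Set.compl_subset_compl.mpr hsubB).eventuallyLE
        exact step.trans (le_csSup hbdd ⟨P, hP, rfl⟩)
      refine le_of_forall_pos_le_add fun ε hε => ?_
      have hε3 : 0 < ε / 3 := by linarith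
      obtain ⟨K, hK, htK⟩ := htight ((ε / 3) / (R + 1)) (div_pos hε3 (by linarith))
      obtain ⟨Φ, hΦne, hΦsub, hΦ⟩ := key_net hΓ a R hRnn _ hrnn hr' hε3 hK
        (fun P hP => (htK P hP).le)
      refine (csInf_le hHWbdd ⟨Φ, hΦne, hΦsub, rfl⟩).trans ?_
      refine Real.sSup_le ?_ (by linarith)
      rintro s ⟨P, hP, rfl⟩
      obtain ⟨Q, hQΦ, hQW⟩ := hΦ P hP
      have hle : sInf {t : ℝ | ∃ Q ∈ Φ, t = W P Q} ≤ W P Q := by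
        refine csInf_le ⟨0, ?_⟩ ⟨Q, hQΦ, rfl⟩
        rintro t ⟨Q', hQ', rfl⟩
        exact W_nonneg _ _
      have h33 : (sSup {s : ℝ | ∃ P ∈ Γ, s = ∫ x in Bᶜ, dist a x ∂P}) + 3 * (ε / 3)
          = (sSup {s : ℝ | ∃ P ∈ Γ, s = ∫ x in Bᶜ, dist a x ∂P}) + ε := by ring
      linarith [hQW, h33.le]
    · -- unbounded case: both sides are the junk value 0
      rw [Real.sSup_of_not_bddAbove hbdd]
      have hinner : ∀ P : Measure S,
          {t : ℝ | ∃ Q ∈ ({Q₀} : Finset (Measure S)), t = W P Q} = {W P Q₀} := by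
        intro P
        ext t
        simp [eq_comm]
      have hnb2 : ¬ BddAbove {s : ℝ | ∃ P ∈ Γ,
          s = sInf {t : ℝ | ∃ Q ∈ ({Q₀} : Finset (Measure S)), t = W P Q}} := by
        rintro ⟨M, hM⟩
        apply hbdd
        refine ⟨M + dist a a₀, ?_⟩
        rintro u ⟨P, hP, rfl⟩
        have hPint := (hΓ hP).2 a₀
        have hPprob : IsProbabilityMeasure P := (hΓ hP).1
        have h1 : ∫ x in Bᶜ, dist a x ∂P ≤ ∫ x, dist a x ∂P :=
          setIntegral_le_integral ((hΓ hP).2 a) (Eventually.of_forall fun x => dist_nonneg)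
        have h2 : ∫ x, dist a x ∂P ≤ ∫ x, dist a₀ x ∂P + dist a a₀ := by
          have : ∀ x, dist a x ≤ dist a₀ x + dist a a₀ := fun x => by
            rw [dist_comm a₀ x]
            calc dist a x ≤ dist a a₀ + dist a₀ x := dist_triangle a a₀ x
              _ = dist x a₀ + dist a a₀ := by rw [dist_comm a₀ x]; ring
          calc ∫ x, dist a x ∂P ≤ ∫ x, (dist a₀ x + dist a a₀) ∂P :=
                integral_mono ((hΓ hP).2 a) (hPint.add (integrable_const _)) this
            _ = ∫ x, dist a₀ x ∂P + dist a a₀ := by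
                rw [integral_add hPint (integrable_const _), integral_const]
                simp
        have h3 : ∫ x, dist a₀ x ∂P ≤ W P Q₀ := by
          have := integral_sub_le_W (hΓ hP) hQ₀ (LipschitzWith.dist_right a₀)
          rw [hQ₀int] at this
          linarith
        have h4 : sInf {t : ℝ | ∃ Q ∈ ({Q₀} : Finset (Measure S)), t = W P Q} = W P Q₀ := by
          rw [hinner P, csInf_singleton]
        have h5 := hM ⟨P, hP, rfl⟩
        rw [h4] at h5
        linarith [dist_nonneg (x := a) (y := a₀)]
      have hz : sSup {s : ℝ | ∃ P ∈ Γ,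
          s = sInf {t : ℝ | ∃ Q ∈ ({Q₀} : Finset (Measure S)), t = W P Q}} = 0 :=
        Real.sSup_of_not_bddAbove hnb2
      exact (csInf_le hHWbdd ⟨{Q₀}, Finset.singleton_nonempty _, hQ₀sub, rfl⟩).trans_eq hz
  -- Direction 2 : muUI ≤ muHW
  have dir2 : muUI Γ ≤ muHW Γ := by
    refine le_csInf ⟨_, ⟨{Q₀}, Finset.singleton_nonempty _, hQ₀sub, rfl⟩⟩ ?_
    rintro r ⟨Φ, hΦne, hΦsub, rfl⟩
    by_cases hbdd : BddAbove {s : ℝ | ∃ P ∈ Γ, s = sInf {t : ℝ | ∃ Q ∈ Φ, t = W P Q}}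
    · have hrnn : 0 ≤ sSup {s : ℝ | ∃ P ∈ Γ, s = sInf {t : ℝ | ∃ Q ∈ Φ, t = W P Q}} := by
        refine Real.sSup_nonneg ?_
        rintro s ⟨P, hP, rfl⟩
        refine Real.sInf_nonneg ?_
        rintro t ⟨Q, hQ, rfl⟩
        exact W_nonneg _ _
      refine muUI_le_bound hΓ Φ hΦsub _ hrnn ?_
      intro P hP
      have hset : {t : ℝ | ∃ Q ∈ Φ, t = W P Q} = ↑(Φ.image fun Q => W P Q) := by
        ext t
        simp [eq_comm]
      have hne' : (Φ.image fun Q => W P Q).Nonempty := hΦne.image _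
      have hmem := hne'.csInf_mem
      rw [← hset] at hmem
      rw [Finset.mem_image] at hmem
      obtain ⟨Q, hQΦ, hWQ⟩ := hmem
      refine ⟨Q, hQΦ, ?_⟩
      rw [hWQ]
      exact le_csSup hbdd ⟨P, hP, rfl⟩
    · rw [Real.sSup_of_not_bddAbove hbdd]
      obtain ⟨Q₁, hQ₁Φ⟩ := hΦne
      have hnb2 : ¬ BddAbove {s : ℝ | ∃ P ∈ Γ, s = ∫ x in (∅ : Set S)ᶜ, dist a₀ x ∂P} := by
        rintro ⟨M, hM⟩
        apply hbdd
        refine ⟨M + ∫ x, dist a₀ x ∂Q₁, ?_⟩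
        rintro u ⟨P, hP, rfl⟩
        have hPprob : IsProbabilityMeasure P := (hΓ hP).1
        have h1 : sInf {t : ℝ | ∃ Q ∈ Φ, t = W P Q} ≤ W P Q₁ := by
          refine csInf_le ⟨0, ?_⟩ ⟨Q₁, hQ₁Φ, rfl⟩
          rintro t ⟨Q', hQ', rfl⟩
          exact W_nonneg _ _
        have h2 : W P Q₁ ≤ (∫ x, dist a₀ x ∂P) + ∫ x, dist a₀ x ∂Q₁ :=
          W_le_moments a₀ (hΓ hP) (hΦsub hQ₁Φ)
        have h3 : ∫ x, dist a₀ x ∂P ≤ M := by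
          have := hM ⟨P, hP, rfl⟩
          rwa [Set.compl_empty, Measure.restrict_univ] at this
        linarith
      have hz : sSup {s : ℝ | ∃ P ∈ Γ, s = ∫ x in (∅ : Set S)ᶜ, dist a₀ x ∂P} = 0 :=
        Real.sSup_of_not_bddAbove hnb2
      exact (csInf_le hUIbdd ⟨a₀, ∅, Bornology.isBounded_empty, rfl⟩).trans_eq hz
  exact ⟨dir1, le_antisymm dir1 dir2⟩
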